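/- Let A = ε²a'(0) > 0, B = |σ'(0)|² > 0, κ ∈ (0,1), δ ∈ (0,1), and x_* > 0. Then r := (1/(1+δ))·∫₀^{x_*/2} (A + By)^{-1} ∫_y^{2y} (1/z)·((A + Bz)/(A + By))^{κ-1} dz dy ≥ (2^{κ-1}·ln 2/((1+δ)B))·ln(1 + Bx_*/(2A)). In particular, r ≥ C·|ln ε| asymptotically as ε → 0, with C = 2^κ·ln 2/((1+δ)B) (up to the asymptotic factor). -/

import Mathlib

open intervalIntegral
open MeasureTheory Set

/-- Lower bound for `r_ε(0+)` in Lemma 6.2(1): for `A, B > 0`, `κ ∈ (0,1)`,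
`δ ∈ (0,1)`, `x_* > 0`,
`(1/(1+δ))·∫₀^{x_*/2} (A+By)⁻¹ ∫_y^{2y} (1/z)((A+Bz)/(A+By))^{κ-1} dz dy
≥ (2^{κ-1} ln 2/((1+δ)B))·ln(1 + Bx_*/(2A))`. -/
theorem stmt16 (A B κ δ xs : ℝ)
    (hA : 0 < A) (hB : 0 < B) (hκ : κ ∈ Set.Ioo (0 : ℝ) 1)
    (hδ : δ ∈ Set.Ioo (0 : ℝ) 1) (hxs : 0 < xs) :
    ((2 : ℝ) ^ (κ - 1) * Real.log 2 / ((1 + δ) * B)) * Real.log (1 + B * xs / (2 * A))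
      ≤ (1 / (1 + δ)) * ∫ y in (0 : ℝ)..(xs / 2),
          (A + B * y)⁻¹ * ∫ z in y..(2 * y), (1 / z) * ((A + B * z) / (A + B * y)) ^ (κ - 1) := by
  set r : ℝ := xs / 2 with hrdef
  have hr : 0 < r := by positivity
  set c : ℝ := (2 : ℝ) ^ (κ - 1) * Real.log 2 with hcdef
  have hlog2 : 0 < Real.log 2 := Real.log_pos one_lt_two
  have hc : 0 < c := by
    have : (0:ℝ) < (2:ℝ) ^ (κ - 1) := Real.rpow_pos_of_pos two_pos _
    positivity
  set f : ℝ → ℝ := fun y => (A + B * y)⁻¹ * ∫ z in y..(2 * y),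
      (1 / z) * ((A + B * z) / (A + B * y)) ^ (κ - 1) with hfdef
  -- basic positivity
  have hden : ∀ y : ℝ, 0 ≤ y → 0 < A + B * y := fun y hy => by nlinarith
  -- integrability of inner integrand
  have hintinner : ∀ y : ℝ, 0 < y →
      IntervalIntegrable (fun z => (1 / z) * ((A + B * z) / (A + B * y)) ^ (κ - 1))
        volume y (2 * y) := by
    intro y hy
    apply ContinuousOn.intervalIntegrable
    rw [Set.uIcc_of_le (by linarith : y ≤ 2 * y)]
    apply ContinuousOn.mul
    · exact continuousOn_const.div continuousOn_id (fun z hz => (lt_of_lt_of_le hy hz.1).ne')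
    · apply ContinuousOn.rpow_const
      · exact ((continuous_const.add (continuous_const.mul continuous_id)).continuousOn).div_const _
      · intro z hz
        left
        have h1 : 0 < A + B * z := by nlinarith [hz.1]
        have h2 : 0 < A + B * y := hden y hy.le
        positivity
  -- inner lower bound
  have inner_lb : ∀ y : ℝ, 0 < y →
      c ≤ ∫ z in y..(2 * y), (1 / z) * ((A + B * z) / (A + B * y)) ^ (κ - 1) := by
    intro y hy
    have h2y : y ≤ 2 * y := by linarith
    have hint1 : IntervalIntegrable (fun z => (2:ℝ) ^ (κ - 1) * z⁻¹) volume y (2 * y) := by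
      apply ContinuousOn.intervalIntegrable
      rw [Set.uIcc_of_le h2y]
      exact continuousOn_const.mul
        (continuousOn_inv₀.mono (fun z hz => (lt_of_lt_of_le hy hz.1).ne'))
    have key : ∫ z in y..(2 * y), (2:ℝ) ^ (κ - 1) * z⁻¹ = c := by
      rw [intervalIntegral.integral_const_mul, integral_inv_of_pos hy (by linarith)]
      congr 1
      field_simp
    calc c = ∫ z in y..(2 * y), (2:ℝ) ^ (κ - 1) * z⁻¹ := key.symm
      _ ≤ _ := by
          apply intervalIntegral.integral_mono_on h2y hint1 (hintinner y hy)
          intro z hz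
          have hz0 : 0 < z := lt_of_lt_of_le hy hz.1
          have hdy : 0 < A + B * y := hden y hy.le
          have hratio : 0 < (A + B * z) / (A + B * y) := by
            have : 0 < A + B * z := by nlinarith [hz.1]
            positivity
          have hr2 : (A + B * z) / (A + B * y) ≤ 2 := by
            rw [div_le_iff₀ hdy]; nlinarith [hz.2]
          rw [one_div, mul_comm ((2:ℝ) ^ (κ - 1))]
          apply mul_le_mul_of_nonneg_left _ (by positivity)
          exact Real.rpow_le_rpow_of_nonpos hratio hr2 (by linarith [hκ.2])
  -- inner upper bound
  have inner_ub : ∀ y : ℝ, 0 < y →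
      (∫ z in y..(2 * y), (1 / z) * ((A + B * z) / (A + B * y)) ^ (κ - 1)) ≤ Real.log 2 := by
    intro y hy
    have h2y : y ≤ 2 * y := by linarith
    have hint1 : IntervalIntegrable (fun z : ℝ => z⁻¹) volume y (2 * y) := by
      apply ContinuousOn.intervalIntegrable
      rw [Set.uIcc_of_le h2y]
      exact continuousOn_inv₀.mono (fun z hz => (lt_of_lt_of_le hy hz.1).ne')
    have key : ∫ z in y..(2 * y), z⁻¹ = Real.log 2 := by
      rw [integral_inv_of_pos hy (by linarith)]
      congr 1
      field_simp
    calc (∫ z in y..(2 * y), (1 / z) * ((A + B * z) / (A + B * y)) ^ (κ - 1))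
        ≤ ∫ z in y..(2 * y), z⁻¹ := by
          apply intervalIntegral.integral_mono_on h2y (hintinner y hy) hint1
          intro z hz
          have hz0 : 0 < z := lt_of_lt_of_le hy hz.1
          have hdy : 0 < A + B * y := hden y hy.le
          have hr1 : 1 ≤ (A + B * z) / (A + B * y) := by
            rw [le_div_iff₀ hdy]; nlinarith [hz.1]
          calc (1 / z) * ((A + B * z) / (A + B * y)) ^ (κ - 1)
              ≤ (1 / z) * 1 := by
                apply mul_le_mul_of_nonneg_left _ (by positivity)
                exact Real.rpow_le_one_of_one_le_of_nonpos hr1 (by linarith [hκ.2])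
            _ = z⁻¹ := by rw [mul_one, one_div]
      _ = Real.log 2 := key
  -- continuity machinery
  set g : ℝ → ℝ := fun z => (1 / z) * (A + B * z) ^ (κ - 1) with hgdef
  have gint : ∀ p q : ℝ, 0 < p → 0 < q → IntervalIntegrable g volume p q := by
    intro p q hp hq
    have hsub : Set.uIcc p q ⊆ Set.Ioi 0 := fun z hz => lt_of_lt_of_le (lt_min hp hq) hz.1
    apply ContinuousOn.intervalIntegrable
    apply ContinuousOn.mul
    · exact continuousOn_const.div continuousOn_id (fun z hz => (hsub hz).ne')
    · apply ContinuousOn.rpow_const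
      · exact ((continuous_const.add (continuous_const.mul continuous_id)).continuousOn)
      · intro z hz
        left
        have : 0 < z := hsub hz
        have : 0 < A + B * z := by nlinarith
        exact this.ne'
  set H : ℝ → ℝ := fun t => ∫ s in (1:ℝ)..t, g s with hHdef
  have Hcont : ∀ t : ℝ, 0 < t → ContinuousAt H t := by
    intro t ht
    apply ContinuousWithinAt.continuousAt (s := Set.Icc (t/2) (t+1))
    · exact intervalIntegral.continuousWithinAt_primitive (measure_singleton t)
        (gint _ _ (lt_min one_pos (by linarith)) (lt_max_iff.mpr (Or.inl one_pos)))
    · exact Icc_mem_nhds (by linarith) (by linarith)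
  have inner_eq : ∀ y : ℝ, 0 < y →
      (∫ z in y..(2 * y), (1 / z) * ((A + B * z) / (A + B * y)) ^ (κ - 1))
        = (A + B * y) ^ (1 - κ) * (H (2 * y) - H y) := by
    intro y hy
    have h2y : y ≤ 2 * y := by linarith
    have hdy : 0 < A + B * y := hden y hy.le
    have e1 : (∫ z in y..(2 * y), (1 / z) * ((A + B * z) / (A + B * y)) ^ (κ - 1))
        = ∫ z in y..(2 * y), (A + B * y) ^ (1 - κ) * g z := by
      apply intervalIntegral.integral_congr
      intro z hz
      rw [Set.uIcc_of_le h2y] at hz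
      have hbz : (0:ℝ) ≤ A + B * z := by nlinarith [hz.1]
      show (1 / z) * ((A + B * z) / (A + B * y)) ^ (κ - 1)
          = (A + B * y) ^ (1 - κ) * ((1 / z) * (A + B * z) ^ (κ - 1))
      rw [Real.div_rpow hbz hdy.le, show (1:ℝ) - κ = -(κ - 1) by ring,
        Real.rpow_neg hdy.le, div_eq_mul_inv]
      ring
    rw [e1, intervalIntegral.integral_const_mul]
    congr 1
    exact (intervalIntegral.integral_interval_sub_left (gint 1 (2*y) one_pos (by linarith))
      (gint 1 y one_pos hy)).symm
  have fcont : ContinuousOn f (Set.Ioi 0) := by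
    have hφ : ContinuousOn
        (fun y => (A + B * y)⁻¹ * ((A + B * y) ^ (1 - κ) * (H (2 * y) - H y)))
        (Set.Ioi 0) := by
      intro y hy
      have hy0 : (0:ℝ) < y := hy
      have hdy : 0 < A + B * y := hden y hy0.le
      have hbase : ContinuousAt (fun y : ℝ => A + B * y) y :=
        (continuous_const.add (continuous_const.mul continuous_id)).continuousAt
      have h1 : ContinuousAt (fun y : ℝ => (A + B * y)⁻¹) y := hbase.inv₀ hdy.ne'
      have h2 : ContinuousAt (fun y : ℝ => (A + B * y) ^ (1 - κ)) y :=
        hbase.rpow_const (Or.inl hdy.ne')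
      have h3 : ContinuousAt (fun y : ℝ => H (2 * y)) y :=
        (Hcont (2 * y) (by linarith)).comp ((continuous_const.mul continuous_id).continuousAt)
      have h4 : ContinuousAt H y := Hcont y hy0
      exact (h1.mul (h2.mul (h3.sub h4))).continuousWithinAt
    exact hφ.congr (fun y hy => by rw [hfdef]; simp only; rw [inner_eq y hy])
  -- measurability and integrability of f
  have fmeas : AEStronglyMeasurable f (volume.restrict (Set.Ioc 0 r)) :=
    (fcont.mono Set.Ioc_subset_Ioi_self).aestronglyMeasurable measurableSet_Ioc
  have fint : IntervalIntegrable f volume 0 r := by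
    rw [intervalIntegrable_iff_integrableOn_Ioc_of_le hr.le]
    apply Integrable.mono' (integrable_const (Real.log 2 / A)) fmeas
    rw [ae_restrict_iff' measurableSet_Ioc]
    refine Filter.Eventually.of_forall (fun y hy => ?_)
    have hy0 : 0 < y := hy.1
    have hdy : 0 < A + B * y := hden y hy0.le
    have hnn : 0 ≤ f y :=
      mul_nonneg (by positivity) (le_trans hc.le (inner_lb y hy0))
    rw [Real.norm_eq_abs, abs_of_nonneg hnn]
    calc f y ≤ (A + B * y)⁻¹ * Real.log 2 :=
          mul_le_mul_of_nonneg_left (inner_ub y hy0) (by positivity)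
      _ ≤ A⁻¹ * Real.log 2 := by
          apply mul_le_mul_of_nonneg_right _ hlog2.le
          exact inv_anti₀ hA (by nlinarith [hy.1])
      _ = Real.log 2 / A := by rw [inv_mul_eq_div]
  -- lower bound function
  have lbint : IntervalIntegrable (fun y => c * (A + B * y)⁻¹) volume 0 r := by
    apply ContinuousOn.intervalIntegrable
    apply ContinuousOn.mul continuousOn_const
    apply ContinuousOn.inv₀
      ((continuous_const.add (continuous_const.mul continuous_id)).continuousOn)
    intro y hy
    rw [Set.uIcc_of_le hr.le] at hy
    exact (hden y hy.1).ne'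
  -- comparison
  have hcomp : (∫ y in (0:ℝ)..r, c * (A + B * y)⁻¹) ≤ ∫ y in (0:ℝ)..r, f y := by
    apply intervalIntegral.integral_mono_ae_restrict hr.le lbint fint
    have h0 : ∀ᵐ y : ℝ ∂volume, y ≠ 0 := by
      have hs : {y : ℝ | ¬ y ≠ 0} = {0} := by ext; simp
      rw [ae_iff, hs]
      exact measure_singleton 0
    filter_upwards [ae_restrict_mem measurableSet_Icc, ae_restrict_of_ae h0] with y hmem hne
    have hy0 : 0 < y := lt_of_le_of_ne hmem.1 (Ne.symm hne)
    calc c * (A + B * y)⁻¹ = (A + B * y)⁻¹ * c := mul_comm _ _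
      _ ≤ f y := mul_le_mul_of_nonneg_left (inner_lb y hy0) (by have := hden y hy0.le; positivity)
  -- compute lower-bound integral
  have hIcalc : (∫ y in (0:ℝ)..r, c * (A + B * y)⁻¹)
      = c * (B⁻¹ * Real.log (1 + B * r / A)) := by
    rw [intervalIntegral.integral_const_mul]
    congr 1
    have hderiv : ∀ y ∈ Set.uIcc (0:ℝ) r,
        HasDerivAt (fun y => B⁻¹ * Real.log (A + B * y)) ((A + B * y)⁻¹) y := by
      intro y hy
      rw [Set.uIcc_of_le hr.le] at hy
      have hdy : 0 < A + B * y := hden y hy.1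
      have h1 : HasDerivAt (fun y : ℝ => A + B * y) B y := by
        simpa using ((hasDerivAt_id y).const_mul B).const_add A
      have h2 := ((Real.hasDerivAt_log hdy.ne').comp y h1).const_mul B⁻¹
      rw [mul_comm ((A + B * y)⁻¹) B, ← mul_assoc, inv_mul_cancel₀ hB.ne', one_mul] at h2
      exact h2
    rw [intervalIntegral.integral_eq_sub_of_hasDerivAt hderiv]
    · have hAr : 0 < A + B * r := hden r hr.le
      rw [mul_zero, add_zero, ← mul_sub, ← Real.log_div hAr.ne' hA.ne']
      congr 2
      field_simp
    · apply ContinuousOn.intervalIntegrable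
      apply ContinuousOn.inv₀
        ((continuous_const.add (continuous_const.mul continuous_id)).continuousOn)
      intro y hy
      rw [Set.uIcc_of_le hr.le] at hy
      exact (hden y hy.1).ne'
  -- conclude
  have h1δ : 0 < 1 + δ := by linarith [hδ.1]
  have hfinal : c * (B⁻¹ * Real.log (1 + B * r / A)) ≤ ∫ y in (0:ℝ)..r, f y := by
    rw [← hIcalc]; exact hcomp
  have harg : 1 + B * r / A = 1 + B * xs / (2 * A) := by
    rw [hrdef]; ring
  calc c / ((1 + δ) * B) * Real.log (1 + B * xs / (2 * A))
      = (1 / (1 + δ)) * (c * (B⁻¹ * Real.log (1 + B * r / A))) := by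
        rw [harg]; field_simp
    _ ≤ (1 / (1 + δ)) * ∫ y in (0:ℝ)..r, f y :=
        mul_le_mul_of_nonneg_left hfinal (by positivity)
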